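/- Clopper–Pearson validity: if K ∼ Binomial(n, p) and p̲ = LowerConfBound(K, n, 1−α) is defined as the infimum over q such that the probability that Binomial(n, q) ≥ K is at least α (equivalently via the Beta quantile), then P(p̲ ≤ p) ≥ 1 − α. -/

import Mathlib

open MeasureTheory ProbabilityTheory Set

/-- Upper tail of the binomial distribution: `P(Binomial(n, q) ≥ k)`. -/
noncomputable def binomTail (n k : ℕ) (q : ℝ) : ℝ :=
  ∑ j ∈ Finset.Icc k n, (n.choose j : ℝ) * q ^ j * (1 - q) ^ (n - j)

/-- The one-sided Clopper–Pearson lower confidence limit for a binomial success probability: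
the infimum over `q ∈ [0,1]` such that `P(Binomial(n, q) ≥ k) ≥ α`. -/
noncomputable def clopperPearsonLower (k n : ℕ) (α : ℝ) : ℝ :=
  sInf {q : ℝ | q ∈ Set.Icc (0 : ℝ) 1 ∧ α ≤ binomTail n k q}

/-- Clopper–Pearson validity: if `K ∼ Binomial(n, p)` and
`p̲ = LowerConfBound(K, n, 1−α)` is the Clopper–Pearson lower confidence limit, then
`P(p̲ ≤ p) ≥ 1 − α`. -/
theorem clopperPearson_validity
    {Ω : Type*} [MeasureSpace Ω] [IsProbabilityMeasure (ℙ : Measure Ω)]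
    (n : ℕ) (p : ℝ) (hp : p ∈ Set.Icc (0 : ℝ) 1)
    (α : ℝ) (hα : α ∈ Set.Ioo (0 : ℝ) 1)
    (K : Ω → ℕ) (hKmeas : Measurable K)
    (hK : ∀ k : ℕ, ℙ {ω | K ω = k} =
      ENNReal.ofReal ((n.choose k : ℝ) * p ^ k * (1 - p) ^ (n - k))) :
    ENNReal.ofReal (1 - α) ≤ ℙ {ω | clopperPearsonLower (K ω) n α ≤ p} := by
  classical
  obtain ⟨hp0, hp1⟩ := hp
  obtain ⟨hα0, hα1⟩ := hα
  set f : ℕ → ℝ := fun k => (n.choose k : ℝ) * p ^ k * (1 - p) ^ (n - k) with hf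
  have hf0 : ∀ k, 0 ≤ f k := fun k =>
    mul_nonneg (mul_nonneg (Nat.cast_nonneg _) (pow_nonneg hp0 _))
      (pow_nonneg (by linarith) _)
  have hsum : ∑ k ∈ Finset.range (n + 1), f k = 1 := by
    have h1 : p + (1 - p) = 1 := by ring
    calc ∑ k ∈ Finset.range (n + 1), f k
        = ∑ k ∈ Finset.range (n + 1), p ^ k * (1 - p) ^ (n - k) * (n.choose k) :=
          Finset.sum_congr rfl (fun k _ => by simp only [hf]; ring)
      _ = (p + (1 - p)) ^ n := (add_pow p (1 - p) n).symm
      _ = 1 := by rw [h1, one_pow]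
  -- witness: tail at n+1 is 0 < α
  have hwit : ∃ k, binomTail n k p < α := by
    refine ⟨n + 1, ?_⟩
    rw [binomTail, Finset.Icc_eq_empty (by omega)]
    simpa using hα0
  set k0 := Nat.find hwit with hk0
  have hk0le : k0 ≤ n + 1 := Nat.find_le (by
    rw [binomTail, Finset.Icc_eq_empty (by omega)]; simpa using hα0)
  have hk0lt : binomTail n k0 p < α := Nat.find_spec hwit
  have hmin : ∀ k < k0, α ≤ binomTail n k p := fun k hk =>
    le_of_not_gt (Nat.find_min hwit hk)
  -- subset
  have hsub : {ω | K ω < k0} ⊆ {ω | clopperPearsonLower (K ω) n α ≤ p} := by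
    intro ω hω
    have hmem : p ∈ {q : ℝ | q ∈ Set.Icc (0 : ℝ) 1 ∧ α ≤ binomTail n (K ω) q} :=
      ⟨⟨hp0, hp1⟩, hmin _ hω⟩
    refine csInf_le ⟨0, ?_⟩ hmem
    rintro q ⟨⟨h0, -⟩, -⟩
    exact h0
  -- measure of {K < k0}
  have hunion : {ω | K ω < k0} = ⋃ k ∈ Finset.range k0, K ⁻¹' {k} := by
    ext ω
    simp only [Set.mem_setOf_eq, Set.mem_iUnion, Finset.mem_range, Set.mem_preimage,
      Set.mem_singleton_iff]
    exact ⟨fun h => ⟨K ω, h, rfl⟩, fun ⟨k, hk, he⟩ => he ▸ hk⟩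
  have hP : ℙ {ω | K ω < k0} = ∑ k ∈ Finset.range k0, ENNReal.ofReal (f k) := by
    rw [hunion, measure_biUnion_finset]
    · exact Finset.sum_congr rfl (fun k _ => by
        have := hK k
        simpa [Set.preimage, Set.mem_singleton_iff] using this)
    · intro i _ j _ hij
      exact Set.disjoint_iff.2 (fun ω ⟨h1, h2⟩ => hij (h1.symm.trans h2))
    · exact fun k _ => hKmeas (measurableSet_singleton k)
  have hsplit : ∑ k ∈ Finset.range k0, f k + binomTail n k0 p = 1 := by
    have h := Finset.sum_Ico_consecutive f (Nat.zero_le k0) hk0le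
    have h2 : binomTail n k0 p = ∑ k ∈ Finset.Ico k0 (n + 1), f k := by
      rw [Finset.Ico_add_one_right_eq_Icc]; rfl
    rw [h2, Finset.range_eq_Ico, h, ← Finset.range_eq_Ico, hsum]
  have hge : 1 - α ≤ ∑ k ∈ Finset.range k0, f k := by linarith
  calc ENNReal.ofReal (1 - α)
      ≤ ENNReal.ofReal (∑ k ∈ Finset.range k0, f k) := ENNReal.ofReal_le_ofReal hge
    _ = ∑ k ∈ Finset.range k0, ENNReal.ofReal (f k) :=
        ENNReal.ofReal_sum_of_nonneg (fun k _ => hf0 k)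
    _ = ℙ {ω | K ω < k0} := hP.symm
    _ ≤ ℙ {ω | clopperPearsonLower (K ω) n α ≤ p} := measure_mono hsub
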